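/- In a quasicomplemented residuated lattice A, for a prime filter P the following are equivalent: (1) P is an α-filter; (2) P contains no dense element; (3) P is a minimal prime filter; (4) for any pair x, y ∈ A with x^⊥⊥ = y^⊥, P contains precisely one of x, y. -/
import Mathlib


/-- A (bounded, integral, commutative) residuated lattice. -/
class ResLattice (A : Type*) extends Lattice A, CommMonoid A, OrderBot A where
  himp : A → A → A
  adjunction : ∀ x y z : A, x * y ≤ z ↔ x ≤ himp y z
  le_one : ∀ x : A, x ≤ 1

variable {A : Type*} [ResLattice A]

/-- Coannihilator of a subset: `X^⊥ = {a | a ⊔ x = 1 for all x ∈ X}`. -/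
def Coann (X : Set A) : Set A := {a | ∀ x ∈ X, a ⊔ x = 1}

/-- Coannulet of an element: `x^⊥`. -/
def rperp (x : A) : Set A := Coann {x}

/-- The principal filter generated by `x`. -/
def PFil (x : A) : Set A := {a | ∃ n : ℕ, 0 < n ∧ x ^ n ≤ a}

/-- Filters of a residuated lattice. -/
def IsRLFilter (F : Set A) : Prop :=
  F.Nonempty ∧ (∀ x ∈ F, ∀ y ∈ F, x * y ∈ F) ∧ (∀ x ∈ F, ∀ y : A, x ⊔ y ∈ F)

/-- Prime filters. -/
def IsRLPrime (P : Set A) : Prop :=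
  IsRLFilter P ∧ P ≠ Set.univ ∧ ∀ x y : A, x ⊔ y ∈ P → x ∈ P ∨ y ∈ P

/-- Minimal prime filters. -/
def IsRLMinPrime (P : Set A) : Prop :=
  IsRLPrime P ∧ ∀ Q : Set A, IsRLPrime Q → Q ⊆ P → Q = P

/-- Quasicomplemented residuated lattice. -/
def Quasicomplemented (A : Type*) [ResLattice A] : Prop :=
  ∀ x : A, ∃ y : A, Coann (rperp x) = rperp y

/-- α-filters. -/
def IsAlphaFilter (F : Set A) : Prop :=
  IsRLFilter F ∧ ∀ x ∈ F, Coann (rperp x) ⊆ F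

/-- The α-filter generated by a subset. -/
def alphaGen (X : Set A) : Set A := ⋂₀ {G : Set A | IsAlphaFilter G ∧ X ⊆ G}

/- ### Auxiliary lemmas -/

lemma rl_le_one (x : A) : x ≤ 1 := ResLattice.le_one x

lemma rl_sup_one (x : A) : x ⊔ 1 = 1 := sup_eq_right.mpr (rl_le_one x)

lemma rl_one_sup (x : A) : 1 ⊔ x = 1 := sup_eq_left.mpr (rl_le_one x)

lemma rl_eq_one {x : A} (h : 1 ≤ x) : x = 1 := le_antisymm (rl_le_one x) h

lemma rl_mul_le_mul_right {x y : A} (z : A) (h : x ≤ y) : x * z ≤ y * z := by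
  rw [ResLattice.adjunction]
  exact le_trans h ((ResLattice.adjunction y z (y * z)).mp le_rfl)

lemma rl_mul_le_mul {x y z w : A} (h1 : x ≤ y) (h2 : z ≤ w) : x * z ≤ y * w :=
  le_trans (rl_mul_le_mul_right z h1) (by
    rw [mul_comm y z, mul_comm y w]; exact rl_mul_le_mul_right y h2)

lemma rl_mul_le_left (x y : A) : x * y ≤ x := by
  calc x * y ≤ x * 1 := rl_mul_le_mul le_rfl (rl_le_one y)
  _ = x := mul_one x

lemma rl_mul_le_right (x y : A) : x * y ≤ y := by
  rw [mul_comm]; exact rl_mul_le_left y x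

lemma rl_sup_mul (x y z : A) : (x ⊔ y) * z = x * z ⊔ y * z := by
  apply le_antisymm
  · rw [ResLattice.adjunction]
    apply sup_le
    · exact (ResLattice.adjunction x z (x * z ⊔ y * z)).mp le_sup_left
    · exact (ResLattice.adjunction y z (x * z ⊔ y * z)).mp le_sup_right
  · exact sup_le (rl_mul_le_mul le_sup_left le_rfl) (rl_mul_le_mul le_sup_right le_rfl)

lemma rl_sup_mul_eq_one {a x y : A} (hx : a ⊔ x = 1) (hy : a ⊔ y = 1) :
    a ⊔ x * y = 1 := by
  apply rl_eq_one
  calc (1 : A) = (a ⊔ x) * (a ⊔ y) := by rw [hx, hy, one_mul]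
    _ = a * (a ⊔ y) ⊔ x * (a ⊔ y) := rl_sup_mul a x (a ⊔ y)
    _ ≤ a ⊔ x * y := by
        apply sup_le
        · exact le_trans (rl_mul_le_left a _) le_sup_left
        · rw [mul_comm x (a ⊔ y), rl_sup_mul]
          apply sup_le
          · exact le_trans (rl_mul_le_left a x) le_sup_left
          · rw [mul_comm y x]; exact le_sup_right

lemma rl_mem_biperp (x : A) : x ∈ Coann (rperp x) := by
  intro a ha
  rw [sup_comm]
  exact ha x rfl

lemma rl_one_mem {F : Set A} (hF : IsRLFilter F) : 1 ∈ F := by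
  obtain ⟨x, hx⟩ := hF.1
  have := hF.2.2 x hx 1
  rwa [rl_sup_one] at this

lemma rl_mem_of_le {F : Set A} (hF : IsRLFilter F) {x y : A} (hx : x ∈ F) (h : x ≤ y) :
    y ∈ F := by
  have := hF.2.2 x hx y
  rwa [sup_eq_right.mpr h] at this

lemma rl_pow_mem {F : Set A} (hF : IsRLFilter F) {x : A} (hx : x ∈ F) (n : ℕ) :
    x ^ n ∈ F := by
  induction n with
  | zero => rw [pow_zero]; exact rl_one_mem hF
  | succ n ih => rw [pow_succ]; exact hF.2.1 _ ih _ hx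

/-- If `x^⊥⊥ = y^⊥` then `x * y` is dense. -/
lemma rl_dense_mul {x y : A} (h : Coann (rperp x) = rperp y) : rperp (x * y) = {1} := by
  ext t
  constructor
  · intro ht
    have ht' : t ⊔ x * y = 1 := ht (x * y) rfl
    have htx : t ⊔ x = 1 := rl_eq_one (by rw [← ht']; exact sup_le_sup_left (rl_mul_le_left x y) t)
    have hty : t ⊔ y = 1 := rl_eq_one (by rw [← ht']; exact sup_le_sup_left (rl_mul_le_right x y) t)
    -- t ∈ x^⊥; also t ∈ rperp y... but x^⊥⊥ = y^⊥ so t ∈ x^⊥⊥.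
    have htpp : t ∈ Coann (rperp x) := by rw [h]; intro a ha; rw [Set.mem_singleton_iff] at ha; rw [ha]; exact hty
    have : t ⊔ t = 1 := htpp t (fun a ha => by rw [Set.mem_singleton_iff] at ha; rw [ha]; exact htx)
    simpa using this
  · intro ht
    rw [Set.mem_singleton_iff] at ht
    subst ht
    intro a ha
    rw [Set.mem_singleton_iff] at ha
    rw [ha, rl_one_sup]

lemma rl_pow_sup_le (a b : A) : ∀ n m : ℕ, (a ⊔ b) ^ (n + m) ≤ a ^ n ⊔ b ^ m := by
  intro n
  induction n with
  | zero =>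
    intro m
    rw [pow_zero]
    exact le_trans (rl_le_one _) le_sup_left
  | succ n ihn =>
    intro m
    induction m with
    | zero =>
      rw [pow_zero]
      exact le_trans (rl_le_one _) le_sup_right
    | succ m ihm =>
      have e : n + 1 + (m + 1) = (n + (m + 1)) + 1 := by omega
      rw [e, pow_succ]
      calc (a ⊔ b) ^ (n + (m + 1)) * (a ⊔ b)
          = (a ⊔ b) ^ (n + (m + 1)) * a ⊔ (a ⊔ b) ^ (n + (m + 1)) * b := by
            rw [mul_comm _ (a ⊔ b), rl_sup_mul, mul_comm a _, mul_comm b _]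
        _ ≤ a ^ (n + 1) ⊔ b ^ (m + 1) := by
            apply sup_le
            · calc (a ⊔ b) ^ (n + (m + 1)) * a ≤ (a ^ n ⊔ b ^ (m + 1)) * a :=
                    rl_mul_le_mul (ihn (m + 1)) le_rfl
                _ = a ^ n * a ⊔ b ^ (m + 1) * a := rl_sup_mul _ _ _
                _ ≤ a ^ (n + 1) ⊔ b ^ (m + 1) := by
                    apply sup_le
                    · rw [← pow_succ]; exact le_sup_left
                    · exact le_trans (rl_mul_le_left _ _) le_sup_right
            · have e2 : n + (m + 1) = (n + 1) + m := by omega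
              calc (a ⊔ b) ^ (n + (m + 1)) * b ≤ (a ^ (n + 1) ⊔ b ^ m) * b := by
                    rw [e2]; exact rl_mul_le_mul (ihm) le_rfl
                _ = a ^ (n + 1) * b ⊔ b ^ m * b := rl_sup_mul _ _ _
                _ ≤ a ^ (n + 1) ⊔ b ^ (m + 1) := by
                    apply sup_le
                    · exact le_trans (rl_mul_le_left _ _) le_sup_left
                    · rw [← pow_succ]; exact le_sup_right

/-- The filter generated by a filter `M` and an element `a`. -/
def rlGen (M : Set A) (a : A) : Set A := {z | ∃ q ∈ M, ∃ n : ℕ, q * a ^ n ≤ z}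

lemma rlGen_filter {M : Set A} (hM : IsRLFilter M) (a : A) : IsRLFilter (rlGen M a) := by
  refine ⟨⟨a, 1, rl_one_mem hM, 1, by rw [one_mul, pow_one]⟩, ?_, ?_⟩
  · rintro x ⟨q1, hq1, n, hn⟩ y ⟨q2, hq2, m, hm⟩
    exact ⟨q1 * q2, hM.2.1 _ hq1 _ hq2, n + m, by
      rw [pow_add]
      calc q1 * q2 * (a ^ n * a ^ m) = (q1 * a ^ n) * (q2 * a ^ m) := mul_mul_mul_comm q1 q2 (a ^ n) (a ^ m)
        _ ≤ x * y := rl_mul_le_mul hn hm⟩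
  · rintro x ⟨q, hq, n, hn⟩ y
    exact ⟨q, hq, n, le_trans hn le_sup_left⟩

lemma rlGen_subset {M : Set A} (_hM : IsRLFilter M) (a : A) : M ⊆ rlGen M a :=
  fun q hq => ⟨q, hq, 0, by rw [pow_zero, mul_one]⟩

lemma rlGen_mem {M : Set A} (hM : IsRLFilter M) (a : A) : a ∈ rlGen M a :=
  ⟨1, rl_one_mem hM, 1, by rw [one_mul, pow_one]⟩

/-- A minimal prime filter contains no dense element. -/
lemma rl_minprime_nodense {P : Set A} (hP : IsRLMinPrime P) :
    ¬ ∃ d ∈ P, rperp d = {1} := by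
  rintro ⟨d, hdP, hdense⟩
  have hPne : P ≠ Set.univ := hP.1.2.1
  -- the ⊔-closed set S
  set S : Set A := {s | ∃ a, a ∉ P ∧ s ≤ a ⊔ d} with hS
  have hSd : d ∈ S := by
    obtain ⟨a, ha⟩ : ∃ a, a ∉ P := by
      by_contra h
      push_neg at h
      exact hPne (Set.eq_univ_of_forall h)
    exact ⟨a, ha, le_sup_right⟩
  -- the collection of filters disjoint from S
  set C : Set (Set A) := {Q | IsRLFilter Q ∧ Q ∩ S = ∅} with hC
  have hone : ({1} : Set A) ∈ C := by
    constructor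
    · exact ⟨⟨1, rfl⟩, fun x hx y hy => by
        rw [Set.mem_singleton_iff] at hx hy; rw [hx, hy, one_mul]; rfl,
        fun x hx y => by rw [Set.mem_singleton_iff] at hx; rw [hx, rl_one_sup]; rfl⟩
    · ext t
      simp only [Set.mem_inter_iff, Set.mem_singleton_iff, Set.mem_empty_iff_false, iff_false,
        not_and]
      rintro rfl ⟨a, haP, hle⟩
      have : a ⊔ d = 1 := rl_eq_one hle
      have : a ∈ rperp d := fun x hx => by rw [Set.mem_singleton_iff] at hx; rw [hx]; exact this
      rw [hdense, Set.mem_singleton_iff] at this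
      exact haP (this ▸ rl_one_mem hP.1.1)
  obtain ⟨M, hM1, hMC, hMmax⟩ := zorn_subset_nonempty C (fun c hc hchain hcne => by
    refine ⟨⋃₀ c, ⟨⟨?_, ?_, ?_⟩, ?_⟩, fun s hs => Set.subset_sUnion_of_mem hs⟩
    · obtain ⟨F, hF⟩ := hcne
      obtain ⟨x, hx⟩ := (hc hF).1.1
      exact ⟨x, F, hF, hx⟩
    · rintro x ⟨F1, hF1, hx⟩ y ⟨F2, hF2, hy⟩
      rcases hchain.total hF1 hF2 with h | h
      · exact ⟨F2, hF2, (hc hF2).1.2.1 x (h hx) y hy⟩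
      · exact ⟨F1, hF1, (hc hF1).1.2.1 x hx y (h hy)⟩
    · rintro x ⟨F, hF, hx⟩ y
      exact ⟨F, hF, (hc hF).1.2.2 x hx y⟩
    · ext t
      simp only [Set.mem_inter_iff, Set.mem_sUnion, Set.mem_empty_iff_false, iff_false, not_and]
      rintro ⟨F, hF, htF⟩ htS
      have := (hc hF).2
      have : t ∈ F ∩ S := ⟨htF, htS⟩
      rw [(hc hF).2] at this
      exact this) {1} hone
  obtain ⟨hMfil, hMdisj⟩ := hMC
  have hdisj : ∀ x ∈ M, x ∉ S := by
    intro x hx hxS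
    have : x ∈ M ∩ S := ⟨hx, hxS⟩
    rw [hMdisj] at this
    exact this
  -- M ⊆ P
  have hMP : M ⊆ P := by
    intro x hx
    by_contra hxP
    exact hdisj x hx ⟨x, hxP, le_sup_left⟩
  -- M is prime
  have hMprime : IsRLPrime M := by
    refine ⟨hMfil, ?_, ?_⟩
    · intro h
      exact hdisj d (h ▸ Set.mem_univ d) hSd
    · intro x y hxy
      by_contra h
      push_neg at h
      obtain ⟨hxM, hyM⟩ := h
      -- the filter generated by M and x meets S, likewise for y
      have key : ∀ z : A, z ∉ M → z ⊔ (x ⊔ y) ∈ M →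
          ∃ u, u ∉ P ∧ ∃ q ∈ M, ∃ n : ℕ, q * z ^ n ≤ u ⊔ d := by
        intro z hzM _
        have hgen : rlGen M z ∉ C := by
          intro hin
          have : rlGen M z ⊆ M := hMmax hin (rlGen_subset hMfil z)
          exact hzM (this (rlGen_mem hMfil z))
        have : ¬ (rlGen M z ∩ S = ∅) := fun h => hgen ⟨rlGen_filter hMfil z, h⟩
        obtain ⟨s, hs1, hs2⟩ := Set.nonempty_iff_ne_empty.mpr this
        obtain ⟨u, huP, hus⟩ := hs2
        obtain ⟨q, hq, n, hn⟩ := hs1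
        exact ⟨u, huP, q, hq, n, le_trans hn hus⟩
      obtain ⟨u, huP, q1, hq1, n, hn⟩ := key x hxM (rl_mem_of_le hMfil hxy le_sup_right)
      obtain ⟨v, hvP, q2, hq2, m, hm⟩ := key y hyM (rl_mem_of_le hMfil hxy le_sup_right)
      -- combine
      have hq12 : q1 * q2 * (x ⊔ y) ^ (n + m) ∈ M :=
        hMfil.2.1 _ (hMfil.2.1 _ hq1 _ hq2) _ (rl_pow_mem hMfil hxy (n + m))
      have hle : q1 * q2 * (x ⊔ y) ^ (n + m) ≤ (u ⊔ v) ⊔ d := by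
        calc q1 * q2 * (x ⊔ y) ^ (n + m) ≤ q1 * q2 * (x ^ n ⊔ y ^ m) :=
              rl_mul_le_mul le_rfl (rl_pow_sup_le x y n m)
          _ = q1 * q2 * x ^ n ⊔ q1 * q2 * y ^ m := by
              rw [mul_comm (q1 * q2) _, rl_sup_mul, mul_comm _ (q1 * q2), mul_comm _ (q1 * q2)]
          _ ≤ (u ⊔ d) ⊔ (v ⊔ d) := by
              apply sup_le
              · refine le_trans ?_ le_sup_left
                calc q1 * q2 * x ^ n ≤ q1 * 1 * x ^ n :=
                      rl_mul_le_mul (rl_mul_le_mul le_rfl (rl_le_one q2)) le_rfl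
                  _ = q1 * x ^ n := by rw [mul_one]
                  _ ≤ u ⊔ d := hn
              · refine le_trans ?_ le_sup_right
                calc q1 * q2 * y ^ m ≤ 1 * q2 * y ^ m :=
                      rl_mul_le_mul (rl_mul_le_mul (rl_le_one q1) le_rfl) le_rfl
                  _ = q2 * y ^ m := by rw [one_mul]
                  _ ≤ v ⊔ d := hm
          _ = (u ⊔ v) ⊔ d := by rw [sup_sup_sup_comm, sup_idem]
      have hmem : (u ⊔ v) ⊔ d ∈ M := rl_mem_of_le hMfil hq12 hle
      have hSuv : (u ⊔ v) ⊔ d ∈ S := by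
        refine ⟨u ⊔ v, ?_, le_rfl⟩
        intro huv
        rcases hP.1.2.2 u v huv with h | h
        · exact huP h
        · exact hvP h
      exact hdisj _ hmem hSuv
  -- minimality gives M = P, contradiction with d ∈ P, d ∉ M
  have := hP.2 M hMprime hMP
  exact hdisj d (this ▸ hdP) hSd

theorem stmt19 (hq : Quasicomplemented A) (P : Set A) (hP : IsRLPrime P) :
    (IsAlphaFilter P ↔ ¬ ∃ d ∈ P, rperp d = {1}) ∧
    ((¬ ∃ d ∈ P, rperp d = {1}) ↔ IsRLMinPrime P) ∧
    (IsRLMinPrime P ↔ ∀ x y : A, Coann (rperp x) = rperp y → (x ∈ P ↔ y ∉ P)) := by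
  have hone : (1 : A) ∈ P := rl_one_mem hP.1
  -- no dense element → α-filter
  have nd_alpha : (¬ ∃ d ∈ P, rperp d = {1}) → IsAlphaFilter P := by
    intro hnd
    refine ⟨hP.1, ?_⟩
    intro x hx a ha
    obtain ⟨y, hy⟩ := hq x
    have hay : a ⊔ y = 1 := by
      have : a ∈ rperp y := hy ▸ ha
      exact this y rfl
    have : a ⊔ y ∈ P := hay ▸ hone
    rcases hP.2.2 a y this with h | h
    · exact h
    · exact absurd ⟨x * y, hP.1.2.1 x hx y h, rl_dense_mul hy⟩ hnd
  -- α-filter → no dense element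
  have alpha_nd : IsAlphaFilter P → ¬ ∃ d ∈ P, rperp d = {1} := by
    rintro hα ⟨d, hdP, hdense⟩
    have : Coann (rperp d) = Set.univ := by
      rw [hdense]
      ext a
      simp only [Set.mem_univ, iff_true]
      intro x hx
      rw [Set.mem_singleton_iff] at hx
      rw [hx, rl_sup_one]
    have : P = Set.univ :=
      Set.eq_univ_of_univ_subset (this ▸ hα.2 d hdP)
    exact hP.2.1 this
  -- no dense element → minimal prime
  have nd_min : (¬ ∃ d ∈ P, rperp d = {1}) → IsRLMinPrime P := by
    intro hnd
    refine ⟨hP, ?_⟩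
    intro Q hQ hQP
    apply Set.Subset.antisymm hQP
    intro x hx
    obtain ⟨y, hy⟩ := hq x
    have hyP : y ∉ P := by
      intro hyP
      exact hnd ⟨x * y, hP.1.2.1 x hx y hyP, rl_dense_mul hy⟩
    have hxy : x ⊔ y = 1 := by
      have : x ∈ rperp y := hy ▸ rl_mem_biperp x
      exact this y rfl
    have : x ⊔ y ∈ Q := hxy ▸ rl_one_mem hQ.1
    rcases hQ.2.2 x y this with h | h
    · exact h
    · exact absurd (hQP h) hyP
  -- (4) → no dense element
  have four_nd : (∀ x y : A, Coann (rperp x) = rperp y → (x ∈ P ↔ y ∉ P)) →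
      ¬ ∃ d ∈ P, rperp d = {1} := by
    rintro h4 ⟨d, hdP, hdense⟩
    have hdd : Coann (rperp d) = rperp (1 : A) := by
      rw [hdense]
      ext a
      constructor
      · intro _ x hx
        rw [Set.mem_singleton_iff] at hx
        rw [hx, rl_sup_one]
      · intro _ x hx
        rw [Set.mem_singleton_iff] at hx
        rw [hx, rl_sup_one]
    exact (h4 d 1 hdd).mp hdP hone
  -- minimal prime → (4)
  have min_four : IsRLMinPrime P → ∀ x y : A, Coann (rperp x) = rperp y → (x ∈ P ↔ y ∉ P) := by
    intro hmin x y hxy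
    have hnd := rl_minprime_nodense hmin
    have hsup : x ⊔ y = 1 := by
      have : x ∈ rperp y := hxy ▸ rl_mem_biperp x
      exact this y rfl
    have hmem : x ⊔ y ∈ P := hsup ▸ hone
    have hor := hP.2.2 x y hmem
    have hnot : ¬ (x ∈ P ∧ y ∈ P) := by
      rintro ⟨hx, hy⟩
      exact hnd ⟨x * y, hP.1.2.1 x hx y hy, rl_dense_mul hxy⟩
    constructor
    · intro hx hy
      exact hnot ⟨hx, hy⟩
    · intro hy
      rcases hor with h | h
      · exact h
      · exact absurd h hy
  exact ⟨⟨alpha_nd, nd_alpha⟩, ⟨nd_min, fun h => rl_minprime_nodense h⟩,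
    ⟨min_four, fun h => nd_min (four_nd h)⟩⟩
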